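/- Let β ∈ (1,2) be the d-Bonacci number with d ≥ 2, and let T be the symmetric β-transformation T(x) = βx - ⌊βx + 1/2⌋ on X = [-1/2, β/2-1) ∪ [1-β/2, 1/2). Then every nonzero x of the form x = ε·∑_{i=2}^d p_i β^{-i} with ε ∈ {1,-1} and p_i ∈ {0,1} lies in X and is a purely periodic point of T: T^d(x) = x. -/

import Mathlib

section PPF

private def qd (d : ℕ) (p : ℕ → ℕ) (i : ℕ) : ℝ :=
  if 2 ≤ i ∧ i ≤ d then (p i : ℝ) else 0

private def cc (d : ℕ) (p : ℕ → ℕ) (n : ℕ) : ℝ :=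
  qd d p (if n ≤ d then n else n - d)

private noncomputable def Gf (β : ℝ) (d : ℕ) (p : ℕ → ℕ) (k : ℕ) : ℝ :=
  ∑ m ∈ Finset.Icc 2 d, cc d p (m + k) * (1/β) ^ m

private noncomputable def Ff (β ε : ℝ) (d : ℕ) (p : ℕ → ℕ) (k : ℕ) : ℝ :=
  ε * (Gf β d p k + qd d p (k+1) * (1/β - 1))

private lemma qd_nonneg (d : ℕ) (p : ℕ → ℕ) (i : ℕ) : 0 ≤ qd d p i := by
  unfold qd; split <;> positivity

private lemma qd_le_one (d : ℕ) (p : ℕ → ℕ) (hp : ∀ i, p i ≤ 1) (i : ℕ) : qd d p i ≤ 1 := by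
  unfold qd; split
  · exact_mod_cast hp i
  · norm_num

private lemma qd_eq_zero (d : ℕ) (p : ℕ → ℕ) {i : ℕ} (h : i ≤ 1 ∨ d + 1 ≤ i) : qd d p i = 0 := by
  unfold qd; rw [if_neg]; omega

private lemma cc_nonneg (d : ℕ) (p : ℕ → ℕ) (n : ℕ) : 0 ≤ cc d p n := qd_nonneg _ _ _

private lemma cc_le_one (d : ℕ) (p : ℕ → ℕ) (hp : ∀ i, p i ≤ 1) (n : ℕ) : cc d p n ≤ 1 :=
  qd_le_one _ _ hp _

private lemma sum_inv_pow_Icc1 {d : ℕ} {β : ℝ} (hd : 1 ≤ d) (h0 : 0 < β)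
    (hβ : β ^ d = ∑ i ∈ Finset.range d, β ^ i) :
    ∑ m ∈ Finset.Icc 1 d, (1/β) ^ m = 1 := by
  have hne : β ≠ 0 := ne_of_gt h0
  rw [← Finset.Ico_add_one_right_eq_Icc, Finset.sum_Ico_eq_sum_range]
  have hd1 : d + 1 - 1 = d := rfl
  rw [hd1]
  have key : ∀ k ∈ Finset.range d, (1/β) ^ (1+k) = β ^ (d-1-k) * (1/β) ^ d := by
    intro k hk
    have hk' : k < d := Finset.mem_range.mp hk
    have e1 : (1+k) + (d-1-k) = d := by omega
    field_simp
    rw [show (1/β)^d = (1/β)^(1+k) * (1/β)^(d-1-k) by rw [← pow_add, e1]]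
    rw [mul_comm, mul_assoc, ← mul_pow, one_div_mul_cancel hne, one_pow, mul_one]
  rw [Finset.sum_congr rfl key, ← Finset.sum_mul, Finset.sum_range_reflect (fun i => β ^ i) d,
    ← hβ, one_div, inv_pow, mul_inv_cancel₀ (pow_ne_zero d hne)]

private lemma sum_inv_pow_Icc2 {d : ℕ} {β : ℝ} (hd : 2 ≤ d) (h0 : 0 < β)
    (hβ : β ^ d = ∑ i ∈ Finset.range d, β ^ i) :
    ∑ m ∈ Finset.Icc 2 d, (1/β) ^ m = 1 - 1/β := by
  have h1 : Finset.Icc 1 d = Finset.cons 1 (Finset.Ioc 1 d) (by simp) :=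
    Finset.Icc_eq_cons_Ioc (by omega)
  have h2 : Finset.Ioc 1 d = Finset.Icc 2 d := (Finset.Icc_add_one_left_eq_Ioc ..).symm
  have := sum_inv_pow_Icc1 (by omega) h0 hβ
  rw [h1, Finset.sum_cons, h2] at this
  have : (1/β) ^ 1 + ∑ m ∈ Finset.Icc 2 d, (1/β) ^ m = 1 := this
  rw [pow_one] at this
  linarith

private lemma inv_pow_d {d : ℕ} {β : ℝ} (h0 : 0 < β)
    (hβ : β ^ d = ∑ i ∈ Finset.range d, β ^ i) :
    (1/β) ^ d = 2 - β := by
  have hne : β ≠ 0 := ne_of_gt h0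
  have h5 : β ^ (d+1) = 2 * β ^ d - 1 := by
    have e1 : ∑ i ∈ Finset.range (d+1), β ^ i = ∑ i ∈ Finset.range d, β ^ (i+1) + 1 := by
      simpa using Finset.sum_range_succ' (fun i => β ^ i) d
    have e2 : ∑ i ∈ Finset.range (d+1), β ^ i = β ^ d + β ^ d := by
      rw [Finset.sum_range_succ, ← hβ]
    have e3 : β ^ (d+1) = ∑ i ∈ Finset.range d, β ^ (i+1) := by
      rw [pow_succ, hβ, Finset.sum_mul]
      exact Finset.sum_congr rfl fun i _ => (pow_succ β i).symm
    rw [e3]; linarith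
  have hpow : β ^ d * (2 - β) = 1 := by
    have : β ^ (d+1) = β ^ d * β := pow_succ β d
    nlinarith
  rw [one_div, inv_pow]
  exact inv_eq_of_mul_eq_one_right hpow

private lemma Gf_shift {d : ℕ} {β : ℝ} (hd : 2 ≤ d) (hne : β ≠ 0) (p : ℕ → ℕ) (k : ℕ) :
    β * Gf β d p k = Gf β d p (k+1) + cc d p (2+k) * (1/β) - cc d p (d+1+k) * (1/β) ^ d := by
  have hβ1 : β * (1/β) = 1 := mul_one_div_cancel hne
  -- rewrite G(k+1) as a sum over Icc 3 (d+1)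
  have hmap : Finset.Icc 3 (d+1) = (Finset.Icc 2 d).map (addRightEmbedding 1) := by
    rw [Finset.map_add_right_Icc]
  have hG1 : Gf β d p (k+1) = ∑ m ∈ Finset.Icc 3 (d+1), cc d p (m + k) * β * (1/β) ^ m := by
    rw [hmap, Finset.sum_map]
    refine Finset.sum_congr rfl fun m _ => ?_
    show cc d p (m + (k+1)) * (1/β) ^ m = cc d p (addRightEmbedding 1 m + k) * β * (1/β) ^ (addRightEmbedding 1 m)
    have he : (addRightEmbedding 1 m : ℕ) = m + 1 := rfl
    rw [he]
    have : m + 1 + k = m + (k+1) := by omega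
    rw [this, pow_succ]
    field_simp
  -- split top element of Icc 3 (d+1)
  have htop : ∑ m ∈ Finset.Icc 3 (d+1), cc d p (m + k) * β * (1/β) ^ m
      = ∑ m ∈ Finset.Icc 3 d, cc d p (m + k) * β * (1/β) ^ m
        + cc d p (d+1+k) * β * (1/β) ^ (d+1) := by
    rw [Finset.sum_Icc_succ_top (by omega)]
  -- split bottom element of Icc 2 d
  have hbot : Gf β d p k
      = cc d p (2+k) * (1/β) ^ 2 + ∑ m ∈ Finset.Icc 3 d, cc d p (m + k) * (1/β) ^ m := by
    unfold Gf
    rw [Finset.Icc_eq_cons_Ioc (by omega : 2 ≤ d), Finset.sum_cons, ← Finset.Icc_add_one_left_eq_Ioc]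
    rfl
  have e1 : β * ((1/β) ^ 2) = 1/β := by
    rw [pow_two]; field_simp
  have e2 : β * (1/β) ^ (d+1) = (1/β) ^ d := by
    rw [pow_succ]; field_simp
  rw [hG1, htop, hbot]
  rw [mul_add, Finset.mul_sum]
  have e3 : ∀ m, β * (cc d p (m + k) * (1/β) ^ m) = cc d p (m + k) * β * (1/β) ^ m := by
    intro m; ring
  rw [Finset.sum_congr rfl fun m _ => e3 m]
  have e4 : β * (cc d p (2+k) * (1/β) ^ 2) = cc d p (2+k) * (1/β) := by
    rw [← mul_assoc, mul_comm β, mul_assoc, e1]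
  have e5 : cc d p (d+1+k) * β * (1/β) ^ (d+1) = cc d p (d+1+k) * (1/β) ^ d := by
    rw [mul_assoc, e2]
  rw [e4, e5]
  ring

end PPF

/-- Every nonzero `x = ε ∑_{i=2}^d pᵢ β^{-i}` with `ε = ±1`, `pᵢ ∈ {0,1}` lies in
`X = [-1/2, β/2-1) ∪ [1-β/2, 1/2)` and is purely periodic: `T^d x = x` for the
symmetric β-transformation `T`. -/
theorem pure_periodic_points_forward (d : ℕ) (hd : 2 ≤ d) (β : ℝ) (h1 : 1 < β) (h2 : β < 2)
    (hβ : β ^ d = ∑ i ∈ Finset.range d, β ^ i)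
    (T : ℝ → ℝ) (hT : ∀ x, T x = β * x - (⌊β * x + 1/2⌋ : ℤ)) :
    ∀ ε : ℝ, (ε = 1 ∨ ε = -1) → ∀ p : ℕ → ℕ, (∀ i, p i ≤ 1) →
      ∀ x : ℝ, x = ε * ∑ i ∈ Finset.Icc 2 d, (p i : ℝ) * (1/β) ^ i → x ≠ 0 →
        x ∈ Set.Ico (-(1 : ℝ)/2) (β/2 - 1) ∪ Set.Ico (1 - β/2) (1/2 : ℝ) ∧
        T^[d] x = x := by
  intro ε hε p hp x hx hx0
  have h0 : (0:ℝ) < β := lt_trans one_pos h1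
  have hne : β ≠ 0 := ne_of_gt h0
  have hb0 : (0:ℝ) < 1/β := by positivity
  have hbhalf : (1:ℝ)/2 < 1/β := by
    rw [div_lt_div_iff₀ (by norm_num) h0]; linarith
  have hb1 : 1/β < 1 := by
    rw [div_lt_one h0]; exact h1
  have hsum2 := sum_inv_pow_Icc2 hd h0 hβ
  have h2β := inv_pow_d h0 hβ
  -- bounds on G
  have hG0 : ∀ k, 0 ≤ Gf β d p k := by
    intro k
    apply Finset.sum_nonneg
    intro m _
    have := cc_nonneg d p (m+k)
    positivity
  have hG1 : ∀ k, Gf β d p k ≤ 1 - 1/β := by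
    intro k
    rw [← hsum2]
    apply Finset.sum_le_sum
    intro m _
    have h := cc_le_one d p hp (m+k)
    have h' := cc_nonneg d p (m+k)
    nlinarith [pow_pos hb0 m]
  -- bounds on F
  have hFub : ∀ k, Ff β ε d p k ≤ 1 - 1/β ∧ -(1 - 1/β) ≤ Ff β ε d p k := by
    intro k
    have hq0 := qd_nonneg d p (k+1)
    have hq1 := qd_le_one d p hp (k+1)
    have hg0 := hG0 k
    have hg1 := hG1 k
    have hi : Gf β d p k + qd d p (k+1) * (1/β - 1) ≤ 1 - 1/β := by nlinarith
    have hi2 : -(1 - 1/β) ≤ Gf β d p k + qd d p (k+1) * (1/β - 1) := by nlinarith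
    unfold Ff
    rcases hε with rfl | rfl
    · constructor <;> nlinarith
    · constructor <;> nlinarith
  -- F 0 = x and F d = x
  have hF0 : Ff β ε d p 0 = x := by
    unfold Ff
    rw [hx]
    have hq1 : qd d p (0+1) = 0 := qd_eq_zero d p (by omega)
    rw [hq1, zero_mul, add_zero]
    unfold Gf
    congr 1
    refine Finset.sum_congr rfl fun m hm => ?_
    have hm' := Finset.mem_Icc.mp hm
    simp only [Nat.add_zero]
    unfold cc
    rw [if_pos (show m ≤ d by omega)]
    unfold qd
    rw [if_pos (show 2 ≤ m ∧ m ≤ d by omega)]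
  have hFd : Ff β ε d p d = x := by
    unfold Ff
    rw [hx]
    have hq1 : qd d p (d+1) = 0 := qd_eq_zero d p (by omega)
    rw [hq1, zero_mul, add_zero]
    unfold Gf
    congr 1
    refine Finset.sum_congr rfl fun m hm => ?_
    have hm' := Finset.mem_Icc.mp hm
    unfold cc
    rw [if_neg (show ¬ m + d ≤ d by omega)]
    have h3 : m + d - d = m := by omega
    rw [h3]
    unfold qd
    rw [if_pos (show 2 ≤ m ∧ m ≤ d by omega)]
  -- the step lemma
  have hstep : ∀ k, k < d → T (Ff β ε d p k) = Ff β ε d p (k+1) := by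
    intro k hk
    have hshift := Gf_shift hd hne p k
    have hc2 : cc d p (2+k) = qd d p (k+2) := by
      unfold cc
      by_cases h : 2 + k ≤ d
      · rw [if_pos h]; congr 1; omega
      · rw [if_neg h]
        have e1 : qd d p (2+k-d) = 0 := qd_eq_zero d p (by omega)
        have e2 : qd d p (k+2) = 0 := qd_eq_zero d p (by omega)
        rw [e1, e2]
    have hcd : cc d p (d+1+k) = qd d p (k+1) := by
      unfold cc
      rw [if_neg (by omega)]
      congr 1
      omega
    have key : β * Ff β ε d p k = Ff β ε d p (k+1) + ε * (qd d p (k+2) - qd d p (k+1)) := by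
      unfold Ff
      have expand : β * (ε * (Gf β d p k + qd d p (k+1) * (1/β - 1)))
          = ε * (β * Gf β d p k + qd d p (k+1) * (β * (1/β) - β)) := by ring
      rw [expand, hshift, hc2, hcd, h2β, mul_one_div_cancel hne]
      have : k + 1 + 1 = k + 2 := rfl
      rw [this]
      ring
    -- the digit as an integer
    obtain ⟨z, hz⟩ : ∃ z : ℤ, (z:ℝ) = ε * (qd d p (k+2) - qd d p (k+1)) := by
      have hqz : ∀ i, ∃ n : ℤ, (n:ℝ) = qd d p i := by
        intro i
        unfold qd
        by_cases h : 2 ≤ i ∧ i ≤ d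
        · exact ⟨(p i : ℤ), by rw [if_pos h]; push_cast; ring⟩
        · exact ⟨0, by rw [if_neg h]; norm_num⟩
      obtain ⟨a, ha⟩ := hqz (k+2)
      obtain ⟨b, hb⟩ := hqz (k+1)
      rcases hε with rfl | rfl
      · exact ⟨a - b, by push_cast; rw [ha, hb]; ring⟩
      · exact ⟨b - a, by push_cast; rw [ha, hb]; ring⟩
    have hFb := hFub (k+1)
    have hfloor : ⌊β * Ff β ε d p k + 1/2⌋ = z := by
      rw [Int.floor_eq_iff]
      rw [key, ← hz]
      constructor
      · have := hFb.2; linarith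
      · have := hFb.1; linarith
    rw [hT, hfloor, key, ← hz]
    ring
  -- iterate
  have hiter : ∀ k, k ≤ d → T^[k] x = Ff β ε d p k := by
    intro k
    induction k with
    | zero => intro _; simpa using hF0.symm
    | succ n ih =>
      intro hn
      rw [Function.iterate_succ_apply', ih (by omega), hstep n (by omega)]
  refine ⟨?_, by rw [hiter d le_rfl, hFd]⟩
  -- membership in X
  set A : ℝ := ∑ i ∈ Finset.Icc 2 d, (p i : ℝ) * (1/β) ^ i with hA
  have hA0 : 0 ≤ A := by
    apply Finset.sum_nonneg
    intro i _
    positivity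
  have hAub : A ≤ 1 - 1/β := by
    rw [← hsum2]
    apply Finset.sum_le_sum
    intro i _
    have := hp i
    have h01 : (p i : ℝ) ≤ 1 := by exact_mod_cast this
    nlinarith [pow_pos hb0 i, (Nat.cast_nonneg (p i) : (0:ℝ) ≤ p i)]
  have hAne : A ≠ 0 := by
    intro h
    apply hx0
    rw [hx, h, mul_zero]
  obtain ⟨i, hi, hpi⟩ : ∃ i ∈ Finset.Icc 2 d, p i ≠ 0 := by
    by_contra hcon
    push_neg at hcon
    apply hAne
    apply Finset.sum_eq_zero
    intro i hi
    rw [hcon i hi]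
    norm_num
  have hAlb : (1/β)^d ≤ A := by
    have h1' : (1/β)^i ≤ A := by
      have : (p i : ℝ) * (1/β)^i ≤ A := by
        apply Finset.single_le_sum (f := fun j => (p j : ℝ) * (1/β)^j) _ hi
        intro j _
        positivity
      have hpi1 : p i = 1 := by have := hp i; omega
      rw [hpi1] at this
      simpa using this
    have h2' : (1/β)^d ≤ (1/β)^i := by
      exact pow_le_pow_of_le_one (le_of_lt hb0) (le_of_lt hb1) (Finset.mem_Icc.mp hi).2
    linarith
  rw [h2β] at hAlb
  have hAhalf : A < 1/2 := by linarith
  rcases hε with rfl | rfl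
  · right
    rw [hx, one_mul, Set.mem_Ico]
    exact ⟨by linarith, hAhalf⟩
  · left
    rw [hx, Set.mem_Ico]
    constructor
    · have : -1 * A = -A := by ring
      rw [this]; linarith
    · have : -1 * A = -A := by ring
      rw [this]; linarith
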